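/- A finite simple graph G has a connected spanning subgraph of diameter exactly three if and only if one of the following holds: (i) G is a complete graph with at least four vertices; (ii) G is connected with diameter two and girth at most four; (iii) G is connected with diameter three. -/

import Mathlib

set_option linter.unusedSectionVars false
set_option maxHeartbeats 1000000

open SimpleGraph Walk

section SpanningDiamThreeHelpers

variable {V : Type*} [Fintype V] {K : SimpleGraph V}


private lemma sym2_ne {a b c d : V} (h1 : a = c → b ≠ d) (h2 : a = d → b ≠ c) :
    s(a,b) ≠ s(c,d) := by
  intro h
  rw [Sym2.eq_iff] at h
  rcases h with ⟨rfl, rfl⟩ | ⟨rfl, rfl⟩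
  · exact h1 rfl rfl
  · exact h2 rfl rfl

private lemma walk_le_two {u v : V} (p : K.Walk u v) (h : p.length ≤ 2) :
    u = v ∨ K.Adj u v ∨ ∃ m, K.Adj u m ∧ K.Adj m v := by
  match p with
  | .nil => exact Or.inl rfl
  | .cons h1 .nil => exact Or.inr (Or.inl h1)
  | .cons h1 (.cons h2 .nil) => exact Or.inr (Or.inr ⟨_, h1, h2⟩)
  | .cons h1 (.cons h2 (.cons h3 q)) => simp [Walk.length_cons] at h

private lemma cases2 (hc : K.Connected) {a b : V} (hd : K.dist a b ≤ 2) :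
    a = b ∨ K.Adj a b ∨ (a ≠ b ∧ ¬ K.Adj a b ∧ ∃ m, K.Adj a m ∧ K.Adj m b) := by
  by_cases hab : a = b
  · exact Or.inl hab
  by_cases hadj : K.Adj a b
  · exact Or.inr (Or.inl hadj)
  obtain ⟨p, hp, hlen⟩ := hc.exists_path_of_dist a b
  rcases walk_le_two p (by omega) with h | h | h
  · exact absurd h hab
  · exact absurd h hadj
  · exact Or.inr (Or.inr ⟨hab, hadj, h⟩)

private lemma egirth_le_of_cycle {a : V} {w : K.Walk a a} (hw : w.IsCycle) :
    K.egirth ≤ w.length := by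
  rw [egirth]
  exact iInf_le_of_le a <| iInf_le_of_le w <| iInf_le_of_le hw le_rfl

private lemma cyc3 {a b c : V} (hab : K.Adj a b) (hbc : K.Adj b c) (hca : K.Adj c a) :
    K.egirth ≤ 3 := by
  have hc : (Walk.cons hab (Walk.cons hbc (Walk.cons hca Walk.nil))).IsCycle := by
    have h1 := hab.ne; have h2 := hbc.ne; have h3 := hca.ne
    simp [Walk.isCycle_def, Walk.isTrail_def, Sym2.eq_iff, List.Nodup]
    aesop
  have := egirth_le_of_cycle hc
  simpa using this

private lemma cyc4 {a b c d : V} (hab : K.Adj a b) (hbc : K.Adj b c) (hcd : K.Adj c d)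
    (hda : K.Adj d a) (hac : a ≠ c) (hbd : b ≠ d) : K.egirth ≤ 4 := by
  have hc : (Walk.cons hab (Walk.cons hbc (Walk.cons hcd (Walk.cons hda Walk.nil)))).IsCycle := by
    have h1 := hab.ne; have h2 := hbc.ne; have h3 := hcd.ne; have h4 := hda.ne
    simp [Walk.isCycle_def, Walk.isTrail_def, Sym2.eq_iff, List.Nodup]
    aesop
  have := egirth_le_of_cycle hc
  simpa using this

private lemma conn_diam3 [Nonempty V] (hw : ∀ u v : V, ∃ p : K.Walk u v, p.length ≤ 3)
    {x y : V} (hlow : ∀ p : K.Walk x y, 3 ≤ p.length) : K.Connected ∧ K.diam = 3 := by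
  have hconn : K.Connected := by
    rw [connected_iff]
    exact ⟨fun u v => (hw u v).elim fun p _ => ⟨p⟩, ‹_›⟩
  have hub : K.ediam ≤ 3 := by
    apply ediam_le_of_edist_le
    intro u v
    obtain ⟨p, hp⟩ := hw u v
    exact (edist_le p).trans (by exact_mod_cast hp)
  have hlb : (3 : ℕ∞) ≤ K.ediam := by
    refine le_trans ?_ (edist_le_ediam (u := x) (v := y))
    rw [edist_eq_sInf]
    refine le_sInf ?_
    rintro _ ⟨p, rfl⟩
    simp only []
    exact_mod_cast hlow p
  refine ⟨hconn, ?_⟩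
  have : K.ediam = 3 := le_antisymm hub hlb
  rw [diam, this]
  rfl

private lemma ediam_ne_top (hc : K.Connected) : K.ediam ≠ ⊤ := by
  haveI := hc.nonempty
  obtain ⟨u, v, h⟩ := K.exists_edist_eq_ediam_of_finite
  rw [← h]
  exact edist_ne_top_iff_reachable.mpr (hc u v)

private lemma detour {x y : V} {c : ℕ} (hc : 1 ≤ c)
    (q : (K.deleteEdges {s(x,y)}).Walk x y) (hq : q.length ≤ c) :
    ∀ {u w : V} (p : K.Walk u w), p.IsPath →
      ∃ r : (K.deleteEdges {s(x,y)}).Walk u w, r.length ≤ p.length + (c - 1) := by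
  intro u w p
  induction p with
  | nil => exact fun _ => ⟨Walk.nil, by simp⟩
  | @cons u m w h t ih =>
    intro hP
    rw [Walk.cons_isPath_iff] at hP
    obtain ⟨htP, hus⟩ := hP
    by_cases he : s(u, m) = s(x, y)
    · have hnot : ∀ e ∈ t.edges, e ∉ ({s(x,y)} : Set (Sym2 V)) := by
        intro e hee hmem
        rw [Set.mem_singleton_iff] at hmem
        subst hmem
        rw [← he] at hee
        exact hus (t.fst_mem_support_of_mem_edges hee)
      set t' : (K.deleteEdges {s(x,y)}).Walk m w := t.toDeleteEdges _ hnot with ht'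
      have hlt' : t'.length = t.length := by
        simp [ht', Walk.toDeleteEdges, Walk.length_transfer]
      rw [Sym2.eq_iff] at he
      rcases he with ⟨rfl, rfl⟩ | ⟨rfl, rfl⟩
      · exact ⟨q.append t', by simp [hlt']; omega⟩
      · exact ⟨q.reverse.append t', by simp [hlt']; omega⟩
    · obtain ⟨r, hr⟩ := ih htP
      have hadj : (K.deleteEdges {s(x,y)}).Adj u m := by
        rw [SimpleGraph.deleteEdges_adj]
        exact ⟨h, by simpa using he⟩
      exact ⟨Walk.cons hadj r, by simp only [Walk.length_cons]; omega⟩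

private lemma lemA (hc : K.Connected) (hd2 : ∀ u v : V, K.dist u v ≤ 2)
    (tf : ∀ a b c : V, K.Adj a b → K.Adj b c → K.Adj c a → False)
    {u w1 v w2 : V} (h1 : K.Adj u w1) (h2 : K.Adj w1 v) (h3 : K.Adj v w2) (h4 : K.Adj w2 u)
    (huv : u ≠ v) (hw : w1 ≠ w2) :
    ∃ H : SimpleGraph V, H ≤ K ∧ H.Connected ∧ H.diam = 3 := by
  haveI : Nonempty V := hc.nonempty
  set K' := K.deleteEdges {s(u, w1)} with hK'def
  have hK' : ∀ a b : V, K.Adj a b → s(a,b) ≠ s(u,w1) → K'.Adj a b := by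
    intro a b h hne
    rw [hK'def, SimpleGraph.deleteEdges_adj]
    exact ⟨h, by simpa using hne⟩
  have hnuv : ¬ K.Adj u v := fun h => tf u w1 v h1 h2 h.symm
  have hnw : ¬ K.Adj w1 w2 := fun h => tf w1 v w2 h2 h3 h.symm
  -- basic surviving edges
  have e1 : K'.Adj u w2 := hK' _ _ h4.symm (sym2_ne (fun _ => hw.symm) (fun h => absurd h h1.ne))
  have e2 : K'.Adj w2 v := hK' _ _ h3.symm
    (sym2_ne (fun h => absurd h h4.ne) (fun h => absurd h hw.symm))
  have e3 : K'.Adj v w1 := hK' _ _ h2.symm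
    (sym2_ne (fun h => absurd h (Ne.symm huv)) (fun h => absurd h (Ne.symm h2.ne)))
  -- P1
  have P1 : ∀ b : V, K.Adj b w1 → b ≠ u → ¬ K.Adj u b → ∃ r : K'.Walk u b, r.length ≤ 3 := by
    intro b hbw1 hbu hnub
    by_cases hbv : b = v
    · subst hbv; exact ⟨Walk.cons e1 (Walk.cons e2 Walk.nil), by simp⟩
    by_cases hw2b : K.Adj w2 b
    · refine ⟨Walk.cons e1 (Walk.cons (hK' _ _ hw2b ?_) Walk.nil), by simp⟩
      exact sym2_ne (fun h => absurd h h4.ne) (fun h => absurd h hw.symm)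
    have hbw2 : b ≠ w2 := fun h => hnw ((h ▸ hbw1) : K.Adj w2 w1).symm
    rcases cases2 hc (hd2 w2 b) with h | h | ⟨_, _, cc, hw2c, hcb⟩
    · exact absurd h.symm hbw2
    · exact absurd h hw2b
    · have hcu : cc ≠ u := fun h => hnub (h ▸ hcb)
      refine ⟨Walk.cons e1 (Walk.cons (hK' _ _ hw2c ?_) (Walk.cons (hK' _ _ hcb ?_) Walk.nil)),
        by simp⟩
      · exact sym2_ne (fun h => absurd h h4.ne) (fun h => absurd h hw.symm)
      · exact sym2_ne (fun h => absurd h hcu) (fun _ => hbu)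
  -- P2
  have P2 : ∀ b : V, K.Adj b u → b ≠ w1 → ¬ K.Adj w1 b → ∃ r : K'.Walk w1 b, r.length ≤ 3 := by
    intro b hbu hbw1 hnw1b
    have hbv : b ≠ v := fun h => hnuv ((h ▸ hbu) : K.Adj v u).symm
    by_cases hvb : K.Adj v b
    · refine ⟨Walk.cons e3.symm (Walk.cons (hK' _ _ hvb ?_) Walk.nil), by simp⟩
      exact sym2_ne (fun h => absurd h (Ne.symm huv)) (fun h => absurd h (Ne.symm h2.ne))
    rcases cases2 hc (hd2 v b) with h | h | ⟨_, _, cc, hvc, hcb⟩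
    · exact absurd h.symm hbv
    · exact absurd h hvb
    · have hcw1 : cc ≠ w1 := fun h => hnw1b (h ▸ hcb)
      refine ⟨Walk.cons e3.symm (Walk.cons (hK' _ _ hvc ?_) (Walk.cons (hK' _ _ hcb ?_) Walk.nil)),
        by simp⟩
      · exact sym2_ne (fun h => absurd h (Ne.symm huv)) (fun h => absurd h (Ne.symm h2.ne))
      · exact sym2_ne (fun _ => hbw1) (fun h => absurd h hcw1)
  -- all pairs have short walks
  have hwalks : ∀ a b : V, ∃ r : K'.Walk a b, r.length ≤ 3 := by
    intro a b
    rcases cases2 hc (hd2 a b) with rfl | hadj | ⟨hne, hnadj, m, ham, hmb⟩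
    · exact ⟨Walk.nil, by simp⟩
    · by_cases hse : s(a,b) = s(u,w1)
      · rw [Sym2.eq_iff] at hse
        rcases hse with ⟨rfl, rfl⟩ | ⟨rfl, rfl⟩
        · exact ⟨Walk.cons e1 (Walk.cons e2 (Walk.cons e3 Walk.nil)), by simp⟩
        · exact ⟨(Walk.cons e1 (Walk.cons e2 (Walk.cons e3 Walk.nil))).reverse, by simp⟩
      · exact ⟨Walk.cons (hK' _ _ hadj hse) Walk.nil, by simp⟩
    · by_cases he1 : s(a,m) = s(u,w1)
      · rw [Sym2.eq_iff] at he1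
        rcases he1 with ⟨rfl, rfl⟩ | ⟨rfl, rfl⟩
        · exact P1 b hmb.symm (fun h => hne h.symm) hnadj
        · exact P2 b hmb.symm (fun h => hne h.symm) hnadj
      · by_cases he2 : s(m,b) = s(u,w1)
        · rw [Sym2.eq_iff] at he2
          rcases he2 with ⟨rfl, rfl⟩ | ⟨rfl, rfl⟩
          · obtain ⟨r, hr⟩ := P2 a ham hne (fun h => hnadj h.symm)
            exact ⟨r.reverse, by simpa using hr⟩
          · obtain ⟨r, hr⟩ := P1 a ham hne (fun h => hnadj h.symm)
            exact ⟨r.reverse, by simpa using hr⟩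
        · exact ⟨Walk.cons (hK' _ _ ham he1) (Walk.cons (hK' _ _ hmb he2) Walk.nil), by simp⟩
  have hlow : ∀ p : K'.Walk u w1, 3 ≤ p.length := by
    intro p
    by_contra hlt
    push_neg at hlt
    rcases walk_le_two p (by omega) with h | h | ⟨m, hm1, hm2⟩
    · exact h1.ne h
    · rw [hK'def, SimpleGraph.deleteEdges_adj] at h
      simp at h
    · rw [hK'def, SimpleGraph.deleteEdges_adj] at hm1 hm2
      exact tf u m w1 hm1.1 hm2.1 h1.symm
  obtain ⟨hconn, hdiam⟩ := conn_diam3 hwalks hlow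
  exact ⟨K', SimpleGraph.deleteEdges_le _, hconn, hdiam⟩

private lemma moore_step (hc : K.Connected) (hd : ∀ u v : V, K.dist u v ≤ 2)
    {x y z : V} (hxy : K.Adj x y) (hxz : K.Adj x z) (hyz : K.Adj y z)
    (hc1 : (K.deleteEdges {s(x,y)}).Connected)
    (hd1 : ∀ u v : V, (K.deleteEdges {s(x,y)}).dist u v ≤ 2)
    (h5 : ¬ (K.deleteEdges {s(x,y)}).egirth ≤ 4)
    {a : V} (hxa : (K.deleteEdges {s(x,y)}).Adj x a) (haz : a ≠ z) :
    ∃ H : SimpleGraph V, H ≤ K ∧ H.Connected ∧ H.diam = 3 := by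
  haveI : Nonempty V := hc.nonempty
  set K1 := K.deleteEdges {s(x,y)} with hK1def
  have hdown1 : ∀ {p q : V}, K1.Adj p q → K.Adj p q := by
    intro p q h; rw [hK1def, SimpleGraph.deleteEdges_adj] at h; exact h.1
  have hK1 : ∀ p q : V, K.Adj p q → s(p,q) ≠ s(x,y) → K1.Adj p q := by
    intro p q h hne; rw [hK1def, SimpleGraph.deleteEdges_adj]; exact ⟨h, by simpa using hne⟩
  have tf1 : ∀ p q r : V, K1.Adj p q → K1.Adj q r → K1.Adj r p → False :=
    fun p q r h1 h2 h3 => h5 ((cyc3 h1 h2 h3).trans (by norm_num))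
  have c4f1 : ∀ p q r t : V, K1.Adj p q → K1.Adj q r → K1.Adj r t → K1.Adj t p →
      p ≠ r → q ≠ t → False :=
    fun p q r t h1 h2 h3 h4 h5' h6 => h5 (cyc4 h1 h2 h3 h4 h5' h6)
  have hnotxy1 : ¬ K1.Adj x y := by
    rw [hK1def, SimpleGraph.deleteEdges_adj]; simp
  have hxz1 : K1.Adj x z :=
    hK1 _ _ hxz (sym2_ne (fun _ => (hyz.ne).symm ∘ Eq.symm ∘ Eq.symm) (fun h => absurd h hxy.ne))
  have hyz1 : K1.Adj y z :=
    hK1 _ _ hyz (sym2_ne (fun h => absurd h (Ne.symm hxy.ne)) (fun _ => Ne.symm hxz.ne))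
  have haney : a ≠ y := fun h => hnotxy1 (h ▸ hxa)
  have hanex : a ≠ x := Ne.symm hxa.ne
  have hay : ¬ K1.Adj a y := fun h => c4f1 x a y z hxa h hyz1 hxz1.symm hxy.ne haz
  rcases cases2 hc1 (hd1 a y) with h | h | ⟨_, _, b, hab, hby⟩
  · exact absurd h haney
  · exact absurd h hay
  -- b properties
  have hbnex : b ≠ x := fun h => hnotxy1 (h ▸ hby)
  have hbnez : b ≠ z := fun h => tf1 x a z hxa (h ▸ hab) hxz1.symm
  have hbney : b ≠ y := hby.ne
  have hbnea : b ≠ a := Ne.symm hab.ne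
  set K2 := K.deleteEdges {s(x,z)} with hK2def
  have hdown2 : ∀ {p q : V}, K2.Adj p q → K.Adj p q := by
    intro p q h; rw [hK2def, SimpleGraph.deleteEdges_adj] at h; exact h.1
  have hK2 : ∀ p q : V, K.Adj p q → s(p,q) ≠ s(x,z) → K2.Adj p q := by
    intro p q h hne; rw [hK2def, SimpleGraph.deleteEdges_adj]; exact ⟨h, by simpa using hne⟩
  have hK2z : ∀ {p q : V}, K2.Adj p q → p = x → q ≠ z := by
    intro p q h hp hq
    subst hp; subst hq
    rw [hK2def, SimpleGraph.deleteEdges_adj] at h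
    simp at h
  have f1 : K2.Adj x y := hK2 _ _ hxy (sym2_ne (fun _ => hyz.ne) (fun h => absurd h hxz.ne))
  have f2 : K2.Adj y b := hK2 _ _ (hdown1 hby).symm
    (sym2_ne (fun h => absurd h (Ne.symm hxy.ne)) (fun h => absurd h hyz.ne))
  have f3 : K2.Adj b a := hK2 _ _ (hdown1 hab).symm
    (sym2_ne (fun h

 => absurd h hbnex) (fun h => absurd h hbnez))
  have f4 : K2.Adj a x := hK2 _ _ (hdown1 hxa).symm
    (sym2_ne (fun h => absurd h hanex) (fun h => absurd h haz))
  have f5 : K2.Adj y z := hK2 _ _ hyz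
    (sym2_ne (fun h => absurd h (Ne.symm hxy.ne)) (fun h => absurd h hyz.ne))
  -- K2 is triangle-free
  have claim : ∀ cc : V, K2.Adj x cc → K2.Adj cc y → False := by
    intro cc hxc hcy
    have hccz : cc ≠ z := hK2z hxc rfl
    have hccx : cc ≠ x := Ne.symm hxc.ne
    have hccy : cc ≠ y := hcy.ne
    have g1 : K1.Adj x cc := hK1 _ _ (hdown2 hxc)
      (sym2_ne (fun _ => hccy ∘ Eq.symm ∘ Eq.symm) (fun h => absurd h hxy.ne))
    have g2 : K1.Adj cc y := hK1 _ _ (hdown2 hcy)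
      (sym2_ne (fun h => absurd h hccx) (fun h => absurd h hccy))
    exact c4f1 x cc y z g1 g2 hyz1 hxz1.symm hxy.ne hccz
  have tf2 : ∀ p q r : V, K2.Adj p q → K2.Adj q r → K2.Adj r p → False := by
    intro p q r hpq hqr hrp
    by_cases epq : s(p,q) = s(x,y)
    · rw [Sym2.eq_iff] at epq
      rcases epq with ⟨rfl, rfl⟩ | ⟨rfl, rfl⟩
      · exact claim r hrp.symm hqr.symm
      · exact claim r hqr hrp
    by_cases eqr : s(q,r) = s(x,y)
    · rw [Sym2.eq_iff] at eqr
      rcases eqr with ⟨rfl, rfl⟩ | ⟨rfl, rfl⟩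
      · exact claim p hpq.symm hrp.symm
      · exact claim p hrp hpq
    by_cases erp : s(r,p) = s(x,y)
    · rw [Sym2.eq_iff] at erp
      rcases erp with ⟨rfl, rfl⟩ | ⟨rfl, rfl⟩
      · exact claim q hqr.symm hpq.symm
      · exact claim q hpq hqr
    · exact tf1 p q r (hK1 _ _ (hdown2 hpq) epq) (hK1 _ _ (hdown2 hqr) eqr)
        (hK1 _ _ (hdown2 hrp) erp)
  -- short walks in K2
  have hwalks2 : ∀ u v : V, ∃ r : K2.Walk u v, r.length ≤ 3 := by
    intro u v
    obtain ⟨p, hp, hlen⟩ := hc.exists_path_of_dist u v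
    obtain ⟨r, hr⟩ := detour (by norm_num : (1:ℕ) ≤ 2) (Walk.cons f1 (Walk.cons f5 Walk.nil)) (by simp) p hp
    exact ⟨r, by have := hd u v; omega⟩
  by_cases hd2' : ∀ u v : V, K2.dist u v ≤ 2
  · have hc2 : K2.Connected := by
      rw [connected_iff]
      exact ⟨fun u v => (hwalks2 u v).elim fun p _ => ⟨p⟩, ‹_›⟩
    obtain ⟨H, hH, hHrest⟩ := lemA hc2 hd2' tf2 f1 f2 f3 f4 hbnex.symm haney.symm
    exact ⟨H, hH.trans (SimpleGraph.deleteEdges_le _), hHrest⟩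
  · push_neg at hd2'
    obtain ⟨u, v, hgt⟩ := hd2'
    have hlow : ∀ p : K2.Walk u v, 3 ≤ p.length := by
      intro p
      by_contra hlt
      push_neg at hlt
      have h2 : K2.dist u v ≤ 2 := le_trans (SimpleGraph.dist_le p) (by omega)
      omega
    obtain ⟨hconn, hdiam⟩ := conn_diam3 hwalks2 hlow
    exact ⟨K2, SimpleGraph.deleteEdges_le _, hconn, hdiam⟩

private lemma cycle3_extract {a : V} (w : K.Walk a a) (hl : w.length = 3) :
    ∃ b c : V, K.Adj a b ∧ K.Adj b c ∧ K.Adj c a := by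
  match w with
  | .nil => simp at hl
  | .cons h1 .nil => simp at hl
  | .cons h1 (.cons h2 .nil) => simp at hl
  | .cons h1 (.cons h2 (.cons h3 .nil)) => exact ⟨_, _, h1, h2, h3⟩
  | .cons h1 (.cons h2 (.cons h3 (.cons h4 t))) => simp [Walk.length_cons] at hl

private lemma cycle4_extract {a : V} (w : K.Walk a a) (hw : w.IsCycle) (hl : w.length = 4) :
    ∃ b c d : V, K.Adj a b ∧ K.Adj b c ∧ K.Adj c d ∧ K.Adj d a ∧ a ≠ c ∧ b ≠ d := by
  match w with
  | .nil => simp at hl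
  | .cons h1 .nil => simp at hl
  | .cons h1 (.cons h2 .nil) => simp at hl
  | .cons h1 (.cons h2 (.cons h3 .nil)) => simp at hl
  | .cons (v := b) h1 (.cons (v := c) h2 (.cons (v := d) h3 (.cons h4 .nil))) =>
    rw [Walk.isCycle_def] at hw
    have hnd := hw.2.2
    simp [List.Nodup] at hnd
    exact ⟨b, c, d, h1, h2, h3, h4, by tauto, by tauto⟩
  | .cons h1 (.cons h2 (.cons h3 (.cons h4 (.cons h5 t)))) => simp [Walk.length_cons] at hl

private lemma master : ∀ (n : ℕ) (K : SimpleGraph V), K.edgeSet.ncard ≤ n → K.Connected →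
    (∀ u v : V, K.dist u v ≤ 2) → (∃ a b : V, a ≠ b ∧ ¬ K.Adj a b) → K.egirth ≤ 4 →
    ∃ H : SimpleGraph V, H ≤ K ∧ H.Connected ∧ H.diam = 3 := by
  intro n
  induction n with
  | zero =>
    intro K hcard hc hd hnon hg
    exfalso
    have hempty : K.edgeSet = ∅ := by
      exact (Set.ncard_eq_zero (Set.toFinite K.edgeSet)).mp (by omega)
    rw [SimpleGraph.edgeSet_eq_empty] at hempty
    rw [hempty] at hg
    simp at hg
  | succ n IH =>
    intro K hcard hc hd hnon hg
    haveI : Nonempty V := hc.nonempty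
    by_cases htri : ∃ x y z : V, K.Adj x y ∧ K.Adj y z ∧ K.Adj z x
    · obtain ⟨x, y, z, hxy, hyz, hzx⟩ := htri
      set K1 := K.deleteEdges {s(x,y)} with hK1def
      have hdown1 : ∀ {p q : V}, K1.Adj p q → K.Adj p q := by
        intro p q h; rw [hK1def, SimpleGraph.deleteEdges_adj] at h; exact h.1
      have hK1 : ∀ p q : V, K.Adj p q → s(p,q) ≠ s(x,y) → K1.Adj p q := by
        intro p q h hne; rw [hK1def, SimpleGraph.deleteEdges_adj]; exact ⟨h, by simpa using hne⟩
      have hnotxy1 : ¬ K1.Adj x y := by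
        rw [hK1def, SimpleGraph.deleteEdges_adj]; simp
      have hxz1 : K1.Adj x z := hK1 _ _ hzx.symm
        (sym2_ne (fun _ => hyz.ne.symm ∘ Eq.symm ∘ Eq.symm) (fun h => absurd h hxy.ne))
      have hyz1 : K1.Adj y z := hK1 _ _ hyz
        (sym2_ne (fun h => absurd h (Ne.symm hxy.ne)) (fun _ => Ne.symm (hzx.symm).ne))
      have walks1 : ∀ u v : V, ∃ r : K1.Walk u v, r.length ≤ 3 := by
        intro u v
        obtain ⟨p, hp, hlen⟩ := hc.exists_path_of_dist u v
        obtain ⟨r, hr⟩ := detour (by norm_num : (1:ℕ) ≤ 2)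
          (Walk.cons hxz1 (Walk.cons hyz1.symm Walk.nil)) (by simp) p hp
        exact ⟨r, by have := hd u v; omega⟩
      have hc1 : K1.Connected := by
        rw [connected_iff]
        exact ⟨fun u v => (walks1 u v).elim fun p _ => ⟨p⟩, ‹_›⟩
      by_cases hd1 : ∀ u v : V, K1.dist u v ≤ 2
      · by_cases hg1 : K1.egirth ≤ 4
        · -- recurse on K1
          have hxyK : s(x,y) ∈ K.edgeSet := hxy
          have hss : K1.edgeSet ⊂ K.edgeSet := by
            rw [hK1def, SimpleGraph.edgeSet_deleteEdges]
            constructor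
            · exact Set.diff_subset
            · intro hsub
              have := hsub hxyK
              simp at this
          have hlt : K1.edgeSet.ncard < K.edgeSet.ncard :=
            Set.ncard_lt_ncard hss (Set.toFinite _)
          obtain ⟨H, hH, hrest⟩ := IH K1 (by omega) hc1 hd1 ⟨x, y, hxy.ne, hnotxy1⟩ hg1
          exact ⟨H, hH.trans (SimpleGraph.deleteEdges_le _), hrest⟩
        · by_cases ha : ∃ a : V, K1.Adj x a ∧ a ≠ z
          · obtain ⟨a, hxa, haz⟩ := ha
            exact moore_step hc hd hxy hzx.symm hyz hc1 hd1 hg1 hxa haz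
          by_cases hb : ∃ a : V, K1.Adj y a ∧ a ≠ z
          · obtain ⟨a, hya, haz⟩ := hb
            have hKswap : K.deleteEdges {s(y,x)} = K.deleteEdges {s(x,y)} := by
              rw [Sym2.eq_swap]
            exact moore_step hc hd hxy.symm hyz hzx.symm
              (by rw [hKswap]; exact hc1) (by rw [hKswap]; exact hd1)
              (by rw [hKswap]; exact hg1) (by rw [hKswap]; exact hya) haz
          · -- γ case: K is a star with center z plus the edge xy
            push_neg at ha hb
            have hz : ∀ v : V, v ≠ z → K1.Adj z v := by
              intro v hv
              by_cases hvx : v = x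
              · subst hvx; exact hxz1.symm
              by_cases hvy : v = y
              · subst hvy; exact hyz1.symm
              rcases cases2 hc1 (hd1 x v) with h | h | ⟨_, _, m, hxm, hmv⟩
              · exact absurd h.symm hvx
              · exact absurd (ha v h) hv
              · have := ha m hxm; subst this; exact hmv
            have NKx : ∀ p : V, K.Adj x p → p = y ∨ p = z := by
              intro p hp
              by_cases hpy : p = y
              · exact Or.inl hpy
              · exact Or.inr (ha p (hK1 _ _ hp (sym2_ne (fun _ => hpy) (fun h => absurd h hxy.ne))))
            have NKy : ∀ p : V, K.Adj y p → p = x ∨ p = z := by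
              intro p hp
              by_cases hpx : p = x
              · exact Or.inl hpx
              · refine Or.inr (hb p (hK1 _ _ hp (sym2_ne ?_ (fun _ => hpx))))
                exact fun h => absurd h (Ne.symm hxy.ne)
            obtain ⟨a0, b0, hne0, hnadj0⟩ := hnon
            have ha0z : a0 ≠ z := by
              intro h; subst h
              exact hnadj0 (hdown1 (hz b0 (Ne.symm hne0)))
            have hb0z : b0 ≠ z := by
              intro h; subst h
              exact hnadj0 (hdown1 (hz a0 hne0)).symm
            have hexu : ∃ u : V, u ≠ x ∧ u ≠ y ∧ u ≠ z := by
              by_cases h : a0 = x ∨ a0 = y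
              · rcases h with rfl | rfl
                · exact ⟨b0, Ne.symm hne0, fun h => hnadj0 (h ▸ hxy), hb0z⟩
                · exact ⟨b0, fun h => hnadj0 (h ▸ hxy.symm), Ne.symm hne0, hb0z⟩
              · push_neg at h
                exact ⟨a0, h.1, h.2, ha0z⟩
            obtain ⟨u, hux, huy, huz⟩ := hexu
            set H := K.deleteEdges {s(x,z)} with hHdef
            have hdownH : ∀ {p q : V}, H.Adj p q → K.Adj p q := by
              intro p q h; rw [hHdef, SimpleGraph.deleteEdges_adj] at h; exact h.1
            have hH : ∀ p q : V, K.Adj p q → s(p,q) ≠ s(x,z) → H.Adj p q := by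
              intro p q h hne; rw [hHdef, SimpleGraph.deleteEdges_adj]; exact ⟨h, by simpa using hne⟩
            have g1 : H.Adj x y := hH _ _ hxy
              (sym2_ne (fun _ => hyz.ne) (fun h => absurd h (hzx.symm).ne))
            have g2 : H.Adj y z := hH _ _ hyz
              (sym2_ne (fun h => absurd h (Ne.symm hxy.ne)) (fun h => absurd h hyz.ne))
            have g3 : ∀ v : V, v ≠ z → v ≠ x → H.Adj z v := by
              intro v hv hvx
              refine hH _ _ (hdown1 (hz v hv)) (sym2_ne (fun h => absurd h hzx.ne) (fun _ => hvx))
            have hwalksH : ∀ p q : V, ∃ r : H.Walk p q, r.length ≤ 3 := by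
              have toz : ∀ v : V, v ≠ x → ∃ r : H.Walk v z, r.length ≤ 1 := by
                intro v hvx
                by_cases hvz : v = z
                · subst hvz; exact ⟨Walk.nil, by simp⟩
                · exact ⟨Walk.cons (g3 v hvz hvx).symm Walk.nil, by simp⟩
              have fromx : ∀ q : V, q ≠ x → ∃ r : H.Walk x q, r.length ≤ 3 := by
                intro q hqx
                by_cases hqy : q = y
                · subst hqy; exact ⟨Walk.cons g1 Walk.nil, by simp⟩
                by_cases hqz : q = z
                · subst hqz; exact ⟨Walk.cons g1 (Walk.cons g2 Walk.nil), by simp⟩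
                · exact ⟨Walk.cons g1 (Walk.cons g2 (Walk.cons (g3 q hqz hqx) Walk.nil)), by simp⟩
              intro p q
              by_cases hpq : p = q
              · subst hpq; exact ⟨Walk.nil, by simp⟩
              by_cases hpx : p = x
              · subst hpx
                obtain ⟨r, hr⟩ := fromx q (fun h => hpq h.symm)
                exact ⟨r, hr⟩
              by_cases hqx : q = x
              · subst hqx
                obtain ⟨r, hr⟩ := fromx p hpx
                exact ⟨r.reverse, by simpa using hr⟩
              · obtain ⟨r1, hr1⟩ := toz p hpx
                obtain ⟨r2, hr2⟩ := toz q hqx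
                exact ⟨r1.append r2.reverse, by simp; omega⟩
            have hlow : ∀ r : H.Walk x u, 3 ≤ r.length := by
              intro r
              by_contra hlt
              push_neg at hlt
              rcases walk_le_two r (by omega) with h | h | ⟨m, h1, h2⟩
              · exact hux h.symm
              · rcases NKx u (hdownH h) with h' | h'
                exacts [huy h', huz h']
              · rcases NKx m (hdownH h1) with h' | h'
                · subst h'
                  rcases NKy u (hdownH h2) with h' | h'
                  exacts [hux h', huz h']
                · subst h'
                  rw [hHdef, SimpleGraph.deleteEdges_adj] at h1
                  simp at h1
            obtain ⟨hconn, hdiam⟩ := conn_diam3 hwalksH hlow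
            exact ⟨H, SimpleGraph.deleteEdges_le _, hconn, hdiam⟩
      · push_neg at hd1
        obtain ⟨u, v, hgt⟩ := hd1
        have hlow : ∀ p : K1.Walk u v, 3 ≤ p.length := by
          intro p
          by_contra hlt
          push_neg at hlt
          have h2 : K1.dist u v ≤ 2 := le_trans (SimpleGraph.dist_le p) (by omega)
          omega
        obtain ⟨hconn, hdiam⟩ := conn_diam3 walks1 hlow
        exact ⟨K1, SimpleGraph.deleteEdges_le _, hconn, hdiam⟩
    · push_neg at htri
      have tf : ∀ a b c : V, K.Adj a b → K.Adj b c → K.Adj c a → False := by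
        intro a b c h1 h2 h3
        exact htri a b c h1 h2 h3
      have hnac : ¬ K.IsAcyclic := by
        intro hAc
        rw [hAc.egirth_eq_top] at hg
        simp at hg
      obtain ⟨a, w, hwc, hwl⟩ := exists_egirth_eq_length.mpr hnac
      have hl4 : w.length ≤ 4 := by
        rw [hwl] at hg
        exact_mod_cast hg
      have hl3 : 3 ≤ w.length := hwc.three_le_length
      interval_cases h : w.length
      · obtain ⟨b, c, h1, h2, h3⟩ := cycle3_extract w h
        exact absurd h3 (fun h3 => tf a b c h1 h2 h3)
      · obtain ⟨b, c, d, h1, h2, h3, h4, hac, hbd⟩ := cycle4_extract w hwc h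
        exact lemA hc hd tf h1 h2 h3 h4 hac hbd

end SpanningDiamThreeHelpers

/-- A finite simple graph `G` has a connected spanning subgraph of
diameter exactly three if and only if (i) `G` is a complete graph with at least four
vertices, or (ii) `G` is connected with diameter two and girth at most four, or
(iii) `G` is connected with diameter three. -/
theorem spanning_subgraph_diam_three_iff {V : Type*} [Fintype V] (G : SimpleGraph V) :
    (∃ H : SimpleGraph V, H ≤ G ∧ H.Connected ∧ H.diam = 3) ↔
      ((G = ⊤ ∧ 4 ≤ Fintype.card V) ∨
        (G.Connected ∧ G.diam = 2 ∧ G.egirth ≤ 4) ∨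
        (G.Connected ∧ G.diam = 3)) := by
  constructor
  · rintro ⟨H, hHG, hHc, hHd⟩
    haveI : Nonempty V := hHc.nonempty
    have hGc : G.Connected := hHc.mono hHG
    have hHet : H.ediam ≠ ⊤ := ediam_ne_top hHc
    obtain ⟨x0, y0, hxy0⟩ := H.exists_dist_eq_diam
    rw [hHd] at hxy0
    obtain ⟨p0, hp0, hp0len⟩ := (hHc x0 y0).exists_path_of_dist
    have hcard : 4 ≤ Fintype.card V := by
      have := hp0.length_lt
      omega
    haveI : Nontrivial V := Fintype.one_lt_card_iff_nontrivial.mp (by omega)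
    have hGd3 : ∀ u v : V, G.dist u v ≤ 3 := by
      intro u v
      refine le_trans ((hHc u v).dist_anti hHG) ?_
      rw [← hHd]
      exact H.dist_le_diam hHet
    have hGet : G.ediam ≠ ⊤ := ediam_ne_top hGc
    have hGe3 : G.ediam ≤ 3 := by
      apply ediam_le_of_edist_le
      intro u v
      obtain ⟨w, hw⟩ := hGc.exists_walk_length_eq_dist u v
      refine le_trans (edist_le w) ?_
      rw [hw]
      exact_mod_cast hGd3 u v
    have hGdiam3 : G.diam ≤ 3 := by
      have := ENat.toNat_le_toNat hGe3 (by simp : (3:ℕ∞) ≠ ⊤)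
      simpa [SimpleGraph.diam] using this
    have hGdpos : G.diam ≠ 0 := by
      rw [Ne, SimpleGraph.diam_eq_zero]
      push_neg
      exact ⟨hGet, ‹_›⟩
    have h123 : G.diam = 1 ∨ G.diam = 2 ∨ G.diam = 3 := by omega
    rcases h123 with h | h | h
    · exact Or.inl ⟨SimpleGraph.diam_eq_one.mp h, hcard⟩
    · refine Or.inr (Or.inl ⟨hGc, h, ?_⟩)
      have hGneH : ¬ (G ≤ H) := by
        intro hle
        have heq : H = G := le_antisymm hHG hle
        rw [heq, h] at hHd
        omega
      have hex : ∃ x y : V, G.Adj x y ∧ ¬ H.Adj x y := by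
        by_contra hcon
        push_neg at hcon
        exact hGneH (fun a b hab => hcon a b hab)
      obtain ⟨x, y, hGxy, hHxy⟩ := hex
      have hne : x ≠ y := hGxy.ne
      have hdl : 2 ≤ H.dist x y := by
        have h0 : H.dist x y ≠ 0 := fun hh => hne ((hHc x y).dist_eq_zero_iff.mp hh)
        have h1 : H.dist x y ≠ 1 := fun hh => hHxy (SimpleGraph.dist_eq_one_iff_adj.mp hh)
        omega
      have hdu : H.dist x y ≤ 3 := by
        rw [← hHd]
        exact H.dist_le_diam hHet
      obtain ⟨p, hp, hplen⟩ := (hHc x y).exists_path_of_dist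
      have hsub : ∀ e ∈ p.edges, e ∈ G.edgeSet := by
        intro e he
        exact SimpleGraph.edgeSet_mono hHG (p.edges_subset_edgeSet he)
      have hq : (p.transfer G hsub).IsPath := hp.transfer _
      have hmem : s(y, x) ∉ (p.transfer G hsub).edges := by
        rw [Walk.edges_transfer]
        intro hmem
        have := p.edges_subset_edgeSet hmem
        rw [SimpleGraph.mem_edgeSet] at this
        exact hHxy this.symm
      have hcyc : (Walk.cons hGxy.symm (p.transfer G hsub)).IsCycle := by
        rw [Walk.cons_isCycle_iff]
        exact ⟨hq, hmem⟩
      have := egirth_le_of_cycle hcyc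
      refine le_trans this ?_
      have hlen : (Walk.cons hGxy.symm (p.transfer G hsub)).length ≤ 4 := by
        rw [Walk.length_cons, Walk.length_transfer, hplen]
        omega
      exact_mod_cast hlen
    · exact Or.inr (Or.inr ⟨hGc, h⟩)
  · rintro (⟨rfl, hcard⟩ | ⟨hc, hd2, hg⟩ | ⟨hc, hd3⟩)
    · -- complete graph with ≥ 4 vertices
      classical
      haveI : Nonempty V := Fintype.card_pos_iff.mp (show 0 < Fintype.card V by omega)
      obtain ⟨a, b, hab⟩ :=
        Fintype.exists_pair_of_one_lt_card (show 1 < Fintype.card V by omega)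
      have hex3 : ∀ (s : Finset V), s.card ≤ 3 → ∃ c : V, c ∉ s := by
        intro s hs
        by_contra hcon
        push_neg at hcon
        have hsub : (Finset.univ : Finset V) ⊆ s := fun v _ => hcon v
        have := Finset.card_le_card hsub
        rw [Finset.card_univ] at this
        omega
      obtain ⟨c, hcmem⟩ := hex3 {a, b} ((Finset.card_insert_le _ _).trans (by simp))
      simp only [Finset.mem_insert, Finset.mem_singleton, not_or] at hcmem
      obtain ⟨hca, hcb⟩ := hcmem
      obtain ⟨d, hdmem⟩ := hex3 {a, b, c}
        ((Finset.card_insert_le _ _).trans (by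
          have := Finset.card_insert_le b ({c} : Finset V)
          simp at this ⊢
          omega))
      simp only [Finset.mem_insert, Finset.mem_singleton, not_or] at hdmem
      obtain ⟨hda, hdb, hdc⟩ := hdmem
      set G' := (⊤ : SimpleGraph V).deleteEdges {e : Sym2 V | a ∈ e ∧ ¬ b ∈ e} with hG'def
      have hadj1 : ∀ u v : V, u ≠ v → u ≠ a → v ≠ a → G'.Adj u v := by
        intro u v huv hua hva
        rw [hG'def, SimpleGraph.deleteEdges_adj]
        refine ⟨by simpa using huv, ?_⟩
        simp only [Set.mem_setOf_eq, Sym2.mem_iff, not_and, not_not, not_or]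
        intro hcon
        rcases hcon with h | h
        exacts [absurd h.symm hua, absurd h.symm hva]
      have hadjab : G'.Adj a b := by
        rw [hG'def, SimpleGraph.deleteEdges_adj]
        refine ⟨by simpa using hab, ?_⟩
        simp [Sym2.mem_iff]
      have hwalks : ∀ u v : V, ∃ p : G'.Walk u v, p.length ≤ 2 := by
        intro u v
        by_cases huv : u = v
        · subst huv; exact ⟨Walk.nil, by simp⟩
        by_cases hua : u = a
        · subst hua
          by_cases hvb : v = b
          · subst hvb; exact ⟨Walk.cons hadjab Walk.nil, by simp⟩
          · exact ⟨Walk.cons hadjab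
              (Walk.cons (hadj1 b v (fun h => hvb h.symm) (Ne.symm hab)
                (fun h => huv h.symm)) Walk.nil), by simp⟩
        by_cases hva : v = a
        · subst hva
          by_cases hub : u = b
          · subst hub; exact ⟨Walk.cons hadjab.symm Walk.nil, by simp⟩
          · exact ⟨Walk.cons (hadj1 u b hub hua (Ne.symm hab))
              (Walk.cons hadjab.symm Walk.nil), by simp⟩
        · exact ⟨Walk.cons (hadj1 u v huv hua hva) Walk.nil, by simp⟩
      have hdist2 : ∀ u v : V, G'.dist u v ≤ 2 := by
        intro u v
        obtain ⟨p, hp⟩ := hwalks u v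
        exact le_trans (SimpleGraph.dist_le p) hp
      have hc' : G'.Connected := by
        rw [connected_iff]
        exact ⟨fun u v => (hwalks u v).elim fun p _ => ⟨p⟩, ‹_›⟩
      have hnon : ∃ u v : V, u ≠ v ∧ ¬ G'.Adj u v := by
        refine ⟨a, c, fun h => hca h.symm, ?_⟩
        intro h
        rw [hG'def, SimpleGraph.deleteEdges_adj] at h
        apply h.2
        constructor
        · simp
        · simp only [Sym2.mem_iff, not_or]
          exact ⟨fun h' => hab h'.symm, fun h' => hcb h'.symm⟩
      have hgir : G'.egirth ≤ 4 := by
        refine le_trans (cyc3 (hadj1 b c (fun h => hcb h.symm) (fun h => hab h.symm) hca)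
          (hadj1 c d (fun h => hdc h.symm) hca hda) (hadj1 d b hdb hda (fun h => hab h.symm))) ?_
        norm_num
      obtain ⟨H, hH, hrest⟩ := master G'.edgeSet.ncard G' le_rfl hc' hdist2 hnon hgir
      exact ⟨H, le_trans hH (le_trans (SimpleGraph.deleteEdges_le _) le_top), hrest⟩
    · -- diameter 2 with girth ≤ 4
      have het : G.ediam ≠ ⊤ := ediam_ne_top hc
      have hdall : ∀ u v : V, G.dist u v ≤ 2 := by
        intro u v
        have := G.dist_le_diam het (u := u) (v := v)
        omega
      haveI : Nonempty V := hc.nonempty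
      obtain ⟨u0, v0, huv0⟩ := G.exists_dist_eq_diam
      rw [hd2] at huv0
      have hnon : ∃ a b : V, a ≠ b ∧ ¬ G.Adj a b := by
        refine ⟨u0, v0, ?_, ?_⟩
        · intro h
          rw [h] at huv0
          simp [SimpleGraph.dist_self] at huv0
        · intro h
          have := SimpleGraph.dist_le (Walk.cons h Walk.nil)
          simp at this
          omega
      exact master G.edgeSet.ncard G le_rfl hc hdall hnon hg
    · exact ⟨G, le_refl G, hc, hd3⟩
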